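/- arXiv:2108.03474 — 2 statements merged into one kernel-verified Lean document; each statement's English description precedes it below -/
import Mathlib

section
/- Let l : List α be a finite list and f : α → ℕ a cost function, and define step(S, x) to be the list obtained from the sorted list S by inserting x in sorted position (by f) and then truncating to the first k elements. Then the result of folding step over l starting from the empty list is a sorted list consisting of min(k, |l|) elements of l whose multiset of f-values equals the k smallest f-values occurring in l (with multiplicity). -/
/-- One step of the window-based smart enumeration: insert `x` into the
sorted window `S` (sorted by cost `f`) and truncate to the first `k`
elements. -/
def step {α : Type*} (k : ℕ) (f : α → ℕ) (S : List α) (x : α) : List α :=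
  (List.orderedInsert (fun a b => f a ≤ f b) x S).take k

private lemma take_orderedInsert {α : Type*} (r : α → α → Prop) [DecidableRel r]
    (a : α) : ∀ (k : ℕ) (T : List α),
    (List.orderedInsert r a T).take k = (List.orderedInsert r a (T.take k)).take k := by
  intro k T
  induction T generalizing k with
  | nil => simp
  | cons b T ih =>
    cases k with
    | zero => simp
    | succ k =>
      by_cases h : r a b
      · simp only [List.orderedInsert, if_pos h, List.take_succ_cons]
        congr 1
        cases k with
        | zero => simp
        | succ m =>
          simp only [List.take_succ_cons, List.take_take]
          rw [Nat.min_eq_left (Nat.le_succ m)]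
      · simp only [List.orderedInsert, if_neg h, List.take_succ_cons]
        rw [ih k]

private lemma map_orderedInsert' {α : Type*} (f : α → ℕ) (x : α) :
    ∀ (S : List α), (List.orderedInsert (fun a b => f a ≤ f b) x S).map f
      = List.orderedInsert (· ≤ ·) (f x) (S.map f) := by
  intro S
  induction S with
  | nil => simp [List.orderedInsert]
  | cons b S ih =>
    by_cases h : f x ≤ f b
    · simp [List.orderedInsert, h]
    · simp [List.orderedInsert, h, ih]

private lemma main_aux {α : Type*} (k : ℕ) (f : α → ℕ) (l : List α) :
    (l.foldl (step k f) []).Pairwise (fun a b => f a ≤ f b) ∧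
    (l.foldl (step k f) []).length = min k l.length ∧
    (↑(l.foldl (step k f) []) : Multiset α) ≤ ↑l ∧
    ((l.foldl (step k f) []).map f) =
      (((l.map f).insertionSort (· ≤ ·)).take k) := by
  haveI : Std.Total (fun a b : α => f a ≤ f b) := ⟨fun a b => le_total _ _⟩
  haveI : IsTrans α (fun a b => f a ≤ f b) := ⟨fun a b c => le_trans⟩
  induction l using List.reverseRecOn with
  | nil => simp
  | append_singleton l x ih =>
    obtain ⟨hs, hl, hm, he⟩ := ih
    set S := l.foldl (step k f) [] with hS
    have hfold : (l ++ [x]).foldl (step k f) [] = step k f S x := by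
      simp [List.foldl_append, hS]
    have hsort' : (List.orderedInsert (fun a b => f a ≤ f b) x S).Pairwise
        (fun a b => f a ≤ f b) := hs.orderedInsert x S
    refine ⟨?_, ?_, ?_, ?_⟩
    · rw [hfold]
      exact hsort'.take
    · rw [hfold]
      have hlen : (List.orderedInsert (fun a b => f a ≤ f b) x S).length = S.length + 1 := by
        rw [(List.perm_orderedInsert (fun a b => f a ≤ f b) x S).length_eq, List.length_cons]
      simp only [step, List.length_take, hlen, hl, List.length_append, List.length_singleton]
      omega
    · rw [hfold]
      have h1 : (↑(step k f S x) : Multiset α) ≤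
          ↑(List.orderedInsert (fun a b => f a ≤ f b) x S) :=
        Multiset.coe_le.mpr (List.take_sublist k _).subperm
      have h2 : (↑(List.orderedInsert (fun a b => f a ≤ f b) x S) : Multiset α)
          = x ::ₘ ↑S := Quot.sound (List.perm_orderedInsert _ x S)
      calc (↑(step k f S x) : Multiset α) ≤ x ::ₘ ↑S := h2 ▸ h1
        _ ≤ x ::ₘ ↑l := Multiset.cons_le_cons x hm
        _ = ↑(l ++ [x]) := by
            rw [Multiset.cons_coe]
            exact Quot.sound (List.perm_append_comm (l₁ := [x]) (l₂ := l))
    · rw [hfold]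
      set T := (l.map f).insertionSort (· ≤ ·) with hT
      have hTsorted : T.Pairwise (· ≤ ·) := List.pairwise_insertionSort _ _
      have step1 : (step k f S x).map f =
          (List.orderedInsert (· ≤ ·) (f x) (T.take k)).take k := by
        simp only [step, List.map_take, map_orderedInsert', he]
      rw [step1, ← take_orderedInsert]
      congr 1
      refine (fun hp h1 h2 => List.Perm.eq_of_pairwise' (r := (· ≤ · : ℕ → ℕ → Prop)) h1 h2 hp) ?_ ?_ ?_
      · have p1 : (List.orderedInsert (· ≤ ·) (f x) T).Perm (f x :: T) :=
          List.perm_orderedInsert _ _ _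
        have p2 : (f x :: T).Perm (f x :: l.map f) :=
          List.Perm.cons _ (List.perm_insertionSort _ _)
        have p3 : (f x :: l.map f).Perm (l.map f ++ [f x]) :=
          List.perm_append_comm (l₁ := [f x]) (l₂ := l.map f)
        have p4 : (((l ++ [x]).map f).insertionSort (· ≤ ·)).Perm (l.map f ++ [f x]) := by
          rw [List.map_append]
          exact List.perm_insertionSort _ _
        exact ((p1.trans p2).trans p3).trans p4.symm
      · exact hTsorted.orderedInsert _ _
      · exact List.pairwise_insertionSort _ _

/-- Folding `step` over a list `l` yields a list, sorted by `f`, of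
`min k |l|` elements drawn from `l` (with multiplicity) whose multiset of
`f`-values is exactly the `k` smallest `f`-values occurring in `l`. -/
theorem smart_enumeration_invariant {α : Type*} (k : ℕ) (f : α → ℕ)
    (l : List α) :
    (l.foldl (step k f) []).Pairwise (fun a b => f a ≤ f b) ∧
    (l.foldl (step k f) []).length = min k l.length ∧
    (↑(l.foldl (step k f) []) : Multiset α) ≤ ↑l ∧
    ((l.foldl (step k f) []).map f : Multiset ℕ) =
      ↑(((l.map f).insertionSort (· ≤ ·)).take k) := by
  obtain ⟨h1, h2, h3, h4⟩ := main_aux k f l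
  exact ⟨h1, h2, h3, by rw [h4]⟩
end

section
/- Fix n ≥ 1 and consider the map f(a,b) = Σ_{i=1}^{n} 2^{i-1}·aᵢ on the set T of pairs (a,b) ∈ {0,1}ⁿ × {0,1}ⁿ satisfying ((b₁ = 1 ∧ ¬(val(a₂…aₙ) < val(b₂…bₙ))) ∨ (b₁ = 0 ∧ val(a₂…aₙ) < val(b₂…bₙ))). Then f takes exactly 2ⁿ distinct values on T (namely all of 0,…,2ⁿ−1), and each value is attained by exactly 2^{n-1} elements of T. -/
/-- Value of the suffix `x₂…xₙ` of a bit string (1-indexed bits stored at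
0-based indices): `val x = Σ_{i=2}^{n} 2^{i-2}·xᵢ`. -/
def suffixVal {n : ℕ} (x : Fin n → Bool) : ℕ :=
  ∑ i ∈ Finset.univ.filter (fun i : Fin n => 0 < (i : ℕ)),
    2 ^ ((i : ℕ) - 1) * (if x i then 1 else 0)

/-- The condition defining the answer sets of `Pₙ`. -/
def pairCond {n : ℕ} (hn : 1 ≤ n) (a b : Fin n → Bool) : Prop :=
  (b ⟨0, hn⟩ = true ∧ ¬ (suffixVal a < suffixVal b)) ∨
  (b ⟨0, hn⟩ = false ∧ suffixVal a < suffixVal b)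

instance {n : ℕ} (hn : 1 ≤ n) (a b : Fin n → Bool) :
    Decidable (pairCond hn a b) := by unfold pairCond; infer_instance

/-- The objective function `f(a,b) = Σ_{i=1}^{n} 2^{i-1}·aᵢ`. -/
def objVal {n : ℕ} (a : Fin n → Bool) : ℕ :=
  ∑ i : Fin n, 2 ^ (i : ℕ) * (if a i then 1 else 0)

lemma suffixVal_eq_of_eqOn {n : ℕ} {x y : Fin n → Bool}
    (h : ∀ i : Fin n, 0 < (i : ℕ) → x i = y i) : suffixVal x = suffixVal y := by
  unfold suffixVal
  apply Finset.sum_congr rfl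
  intro i hi
  rw [h i (by simpa using hi)]

lemma pairCond_iff {n : ℕ} (hn : 1 ≤ n) (a b : Fin n → Bool) :
    pairCond hn a b ↔ b ⟨0, hn⟩ = ! decide (suffixVal a < suffixVal b) := by
  unfold pairCond
  by_cases hl : suffixVal a < suffixVal b <;> cases hb : b ⟨0, hn⟩ <;> simp [hl, hb]

/-- Equivalence realizing `objVal` as a bijection onto `Fin (2^n)`. -/
noncomputable def objEquiv (n : ℕ) : (Fin n → Bool) ≃ Fin (2 ^ n) :=
  (Equiv.arrowCongr (Equiv.refl (Fin n)) finTwoEquiv.symm).trans finFunctionFinEquiv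

lemma objEquiv_val {n : ℕ} (a : Fin n → Bool) : ((objEquiv n a : Fin (2 ^ n)) : ℕ) = objVal a := by
  unfold objEquiv objVal
  simp only [Equiv.trans_apply, Equiv.arrowCongr_apply, finFunctionFinEquiv_apply]
  apply Finset.sum_congr rfl
  intro i _
  cases h : a i <;> simp [h, finTwoEquiv, mul_comm]

lemma objVal_lt {n : ℕ} (a : Fin n → Bool) : objVal a < 2 ^ n := by
  rw [← objEquiv_val]; exact (objEquiv n a).isLt

lemma objVal_inj {n : ℕ} : Function.Injective (objVal (n := n)) := by
  intro a b h
  have : (objEquiv n a : ℕ) = (objEquiv n b : ℕ) := by rw [objEquiv_val, objEquiv_val, h]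
  exact (objEquiv n).injective (Fin.ext this)

lemma objVal_surj {n : ℕ} (v : ℕ) (hv : v < 2 ^ n) : ∃ a : Fin n → Bool, objVal a = v := by
  refine ⟨(objEquiv n).symm ⟨v, hv⟩, ?_⟩
  rw [← objEquiv_val, Equiv.apply_symm_apply]

lemma card_pairCond {n : ℕ} (hn : 1 ≤ n) (a : Fin n → Bool) :
    (Finset.univ.filter (fun b => pairCond hn a b)).card = 2 ^ (n - 1) := by
  set z : Fin n := ⟨0, hn⟩ with hzdef
  set ψ : (Fin n → Bool) → (Fin n → Bool) := fun b => Function.update b z (! b z) with hψ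
  have hsuf : ∀ b, suffixVal (ψ b) = suffixVal b := by
    intro b
    apply suffixVal_eq_of_eqOn
    intro i hi
    apply Function.update_of_ne
    intro h
    rw [h] at hi
    simp [hzdef] at hi
  have hz : ∀ b, ψ b z = ! b z := by intro b; simp [hψ]
  have hinv : ∀ b, ψ (ψ b) = b := by
    intro b
    funext i
    by_cases h : i = z
    · subst h; simp [hψ]
    · simp [hψ, Function.update_of_ne h]
  have hswap : ∀ b, pairCond hn a b → ¬ pairCond hn a (ψ b) := by
    intro b hb hpb
    rw [pairCond_iff] at hb hpb
    rw [hz, hsuf] at hpb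
    rw [← hzdef] at hb
    rw [hb] at hpb
    cases decide (suffixVal a < suffixVal b) <;> simp at hpb
  have hswap' : ∀ b, ¬ pairCond hn a b → pairCond hn a (ψ b) := by
    intro b hb
    rw [pairCond_iff] at hb ⊢
    rw [hz, hsuf]
    cases hbz : b z <;> cases hd : decide (suffixVal a < suffixVal b) <;>
      simp_all [hzdef]
  have hcardeq : (Finset.univ.filter (fun b => pairCond hn a b)).card
      = (Finset.univ.filter (fun b => ¬ pairCond hn a b)).card := by
    apply Finset.card_bij' (fun b _ => ψ b) (fun b _ => ψ b)
    · intro b hb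
      simp only [Finset.mem_filter, Finset.mem_univ, true_and] at hb ⊢
      exact hswap b hb
    · intro b hb
      simp only [Finset.mem_filter, Finset.mem_univ, true_and] at hb ⊢
      exact hswap' b hb
    · intro b _; exact hinv b
    · intro b _; exact hinv b
  have htotal := Finset.card_filter_add_card_filter_not
    (s := (Finset.univ : Finset (Fin n → Bool))) (fun b => pairCond hn a b)
  have hcu : (Finset.univ : Finset (Fin n → Bool)).card = 2 ^ n := by
    simp [Finset.card_univ]
  have h2 : 2 ^ n = 2 * 2 ^ (n - 1) := by
    conv_lhs => rw [show n = (n - 1) + 1 from (Nat.succ_pred_eq_of_pos hn).symm]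
    rw [pow_succ]
    ring
  omega

/-- On the set `T` of pairs satisfying the condition, the objective takes
exactly the `2ⁿ` values `0,…,2ⁿ−1`, and each value is attained by exactly
`2^{n-1}` elements of `T`. -/
theorem objVal_distribution {n : ℕ} (hn : 1 ≤ n) :
    ((Finset.univ.filter
        (fun p : (Fin n → Bool) × (Fin n → Bool) => pairCond hn p.1 p.2)).image
        (fun p => objVal p.1)) = Finset.range (2 ^ n)
    ∧
    ∀ v < 2 ^ n,
      ((Finset.univ.filter
          (fun p : (Fin n → Bool) × (Fin n → Bool) =>
            pairCond hn p.1 p.2 ∧ objVal p.1 = v)).card) = 2 ^ (n - 1) := by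
  constructor
  · ext v
    simp only [Finset.mem_image, Finset.mem_filter, Finset.mem_univ, true_and,
      Finset.mem_range]
    constructor
    · rintro ⟨p, _, rfl⟩
      exact objVal_lt p.1
    · intro hv
      obtain ⟨a, ha⟩ := objVal_surj v hv
      refine ⟨(a, Function.update (fun _ => false) ⟨0, hn⟩ true), ?_, ha⟩
      have hsuf : suffixVal (Function.update (fun _ => false) ⟨0, hn⟩ true)
          = suffixVal (fun _ : Fin n => false) := by
        apply suffixVal_eq_of_eqOn
        intro i hi
        apply Function.update_of_ne
        intro h
        rw [h] at hi
        simp at hi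
      have hzero : suffixVal (fun _ : Fin n => false) = 0 := by
        unfold suffixVal; simp
      left
      constructor
      · simp
      · rw [hsuf, hzero]; omega
  · intro v hv
    obtain ⟨a₀, ha₀⟩ := objVal_surj v hv
    have hset : (Finset.univ.filter
          (fun p : (Fin n → Bool) × (Fin n → Bool) =>
            pairCond hn p.1 p.2 ∧ objVal p.1 = v))
        = {a₀} ×ˢ (Finset.univ.filter (fun b => pairCond hn a₀ b)) := by
      ext p
      simp only [Finset.mem_filter, Finset.mem_univ, true_and, Finset.mem_product,
        Finset.mem_singleton]
      constructor
      · rintro ⟨hp, hov⟩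
        have : p.1 = a₀ := objVal_inj (by rw [hov, ha₀])
        exact ⟨this, this ▸ hp⟩
      · rintro ⟨h1, h2⟩
        exact ⟨h1 ▸ h2, h1 ▸ ha₀⟩
    rw [hset, Finset.card_product, Finset.card_singleton, one_mul, card_pairCond hn a₀]
end
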